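/- Let S_{α,β}(x) = αx + β (mod 1) with (α,β) ∈ D_{n,l}. Then the n points p_i = β/(1-α) - A_i(α), i = 0,...,n-1, where A_i(α) = (1/(1-α^n))( Σ_{m=0}^{i-1} k_m α^{i-m-1} + Σ_{m=i}^{n-1} k_m α^{n+i-m-1} ), form a periodic orbit of period n for S_{α,β}; that is, S_{α,β}(p_i) = p_{i+1 mod n} for each i, and the p_i are pairwise distinct points of [0,1). -/

import Mathlib

/-- The rational characteristic sequence with respect to `(n, l)`:
`k_m = ⌊(m+1)l/n⌋ - ⌊ml/n⌋` for `m ∈ ℤ`. -/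
def charSeq (n l : ℕ) (m : ℤ) : ℤ :=
  Int.fdiv ((m + 1) * l) n - Int.fdiv (m * l) n

/-- The upper boundary `B^U_{n,l}(α)`. -/
noncomputable def BU (n l : ℕ) (α : ℝ) : ℝ :=
  (1 - α) * ((1 / (1 - α ^ n)) * (∑ m ∈ Finset.Ico 1 n, (charSeq n l m : ℝ) * α ^ m) + 1)

/-- The lower boundary `B^L_{n,l}(α)`. -/
noncomputable def BL (n l : ℕ) (α : ℝ) : ℝ :=
  BU n l α - (1 - α) * (α ^ (n - 1) - α ^ n) / (1 - α ^ n)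

/-- The parameter region `D_{n,l}`. -/
noncomputable def Dset (n l : ℕ) : Set (ℝ × ℝ) :=
  {p | p.1 ∈ Set.Ioo (0 : ℝ) 1 ∧ p.2 ∈ Set.Ioo (0 : ℝ) 1 ∧
    BL n l p.1 ≤ p.2 ∧ p.2 < BU n l p.1}

/-- The Nagumo–Sato map `S_{α,β}(x) = αx + β (mod 1)`. -/
noncomputable def Smap (α β x : ℝ) : ℝ := Int.fract (α * x + β)

/-- `A_i(α)` from the formula for the periodic points. -/
noncomputable def Afun (n l : ℕ) (α : ℝ) (i : ℕ) : ℝ :=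
  (1 / (1 - α ^ n)) *
    ((∑ m ∈ Finset.range i, (charSeq n l m : ℝ) * α ^ (i - m - 1)) +
      ∑ m ∈ Finset.Ico i n, (charSeq n l m : ℝ) * α ^ (n + i - m - 1))

/-! ### Auxiliary machinery -/

section Aux

lemma emod_shift {n a b q : ℤ} (h : a = b + q * n) : a % n = b % n := by
  rw [h, Int.add_mul_emod_self_right]

lemma emod_val {n a c q : ℤ} (h : a = c + q * n) (h0 : 0 ≤ c) (h1 : c < n) :
    a % n = c := by rw [emod_shift h, Int.emod_eq_of_lt h0 h1]

lemma charSeq_eq (n l : ℕ) (hn : 0 < n) (hl : l < n) (m : ℤ) :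
    charSeq n l m = if (n:ℤ) ≤ (m*l) % n + l then 1 else 0 := by
  have hn' : (0:ℤ) < n := by exact_mod_cast hn
  unfold charSeq
  rw [Int.fdiv_eq_ediv_of_nonneg _ (le_of_lt hn'), Int.fdiv_eq_ediv_of_nonneg _ (le_of_lt hn')]
  have h1 : (m + 1) * l = (m*l % n + l) + (m*l/n) * n := by
    have := Int.emod_add_mul_ediv (m*l) n
    ring_nf
    ring_nf at this
    linarith
  rw [h1, Int.add_mul_ediv_right _ _ (ne_of_gt hn')]
  have h0 : 0 ≤ m*l % n := Int.emod_nonneg _ (ne_of_gt hn')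
  have h2 : m*l % n < n := Int.emod_lt_of_pos _ hn'
  have hl' : (0:ℤ) ≤ l := by positivity
  have hln : (l:ℤ) < n := by exact_mod_cast hl
  by_cases h : (n:ℤ) ≤ m*l % n + l
  · have : (m*l % n + l) / n = 1 := by
      have e : m*l % n + l = (m*l % n + l - n) + 1 * n := by ring
      rw [e, Int.add_mul_ediv_right _ _ (ne_of_gt hn'),
        Int.ediv_eq_zero_of_lt (by linarith) (by linarith)]
      omega
    rw [this]; simp [h]
  · have : (m*l % n + l) / n = 0 := Int.ediv_eq_zero_of_lt (by linarith) (by omega)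
    rw [this]; simp [h]

lemma charSeq_congr (n l : ℕ) (hn : 0 < n) (hl : l < n) {m m' : ℤ}
    (h : m % n = m' % n) : charSeq n l m = charSeq n l m' := by
  rw [charSeq_eq n l hn hl, charSeq_eq n l hn hl]
  have : m * l % n = m' * l % n := Int.ModEq.mul_right l h
  rw [this]

lemma charSeq_sub_n (n l : ℕ) (hn : 0 < n) (hl : l < n) (m : ℤ) :
    charSeq n l (m - n) = charSeq n l m :=
  charSeq_congr n l hn hl (emod_shift (q := -1) (by ring))

/-- The coefficient function. -/
def coefZ (n l : ℕ) (r j : ℤ) : ℤ :=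
  if (n:ℤ) ≤ (r - (j+1)*l) % n + l then 1 else 0

/-- The generating sum. -/
noncomputable def Gfun (n l : ℕ) (α : ℝ) (r : ℤ) : ℝ :=
  ∑ j ∈ Finset.range n, ((coefZ n l r j : ℤ) : ℝ) * α^j

lemma Afun_F (n l : ℕ) (hn : 0 < n) (hl : l < n) (α : ℝ) (i : ℕ) (hi : i ≤ n) :
    Afun n l α i = (1 / (1 - α ^ n)) *
      ∑ j ∈ Finset.range n, (charSeq n l ((i:ℤ) - 1 - j) : ℝ) * α ^ j := by
  unfold Afun
  congr 1
  rw [← Finset.sum_range_add_sum_Ico _ hi]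
  congr 1
  · rw [← Finset.sum_range_reflect (fun m => (charSeq n l m : ℝ) * α ^ (i - m - 1)) i]
    apply Finset.sum_congr rfl
    intro j hj
    rw [Finset.mem_range] at hj
    have h1 : ((i - 1 - j : ℕ) : ℤ) % n = ((i:ℤ) - 1 - j) % n := by
      congr 1; omega
    have e2 : i - (i - 1 - j) - 1 = j := by omega
    rw [charSeq_congr n l hn hl h1, e2]
  · rw [Finset.sum_Ico_eq_sum_range, Finset.sum_Ico_eq_sum_range]
    rw [← Finset.sum_range_reflect
      (fun a => (charSeq n l (i + a : ℕ) : ℝ) * α ^ (n + i - (i + a) - 1)) (n - i)]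
    apply Finset.sum_congr rfl
    intro a ha
    rw [Finset.mem_range] at ha
    have h1 : ((i + (n - i - 1 - a) : ℕ) : ℤ) % n = ((i:ℤ) - 1 - (i + a)) % n := by
      have e1 : ((i + (n - i - 1 - a) : ℕ) : ℤ) = ((i:ℤ) - 1 - (i + a)) + n * 1 := by
        push_cast; omega
      rw [e1, Int.add_mul_emod_self_left]
    have e2 : n + i - (i + (n - i - 1 - a)) - 1 = i + a := by omega
    rw [charSeq_congr n l hn hl h1, e2]
    norm_cast

lemma Afun_n_eq_zero (n l : ℕ) (hn : 0 < n) (hl : l < n) (α : ℝ) :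
    Afun n l α n = Afun n l α 0 := by
  rw [Afun_F n l hn hl α n le_rfl, Afun_F n l hn hl α 0 (by omega)]
  congr 1
  apply Finset.sum_congr rfl
  intro j _
  congr 1
  exact_mod_cast charSeq_congr n l hn hl
    (emod_shift (q := 1) (by push_cast; ring) :
      ((n:ℤ) - 1 - j) % n = (((0:ℕ):ℤ) - 1 - j) % n)

lemma Afun_rec (n l : ℕ) (hn : 0 < n) (hl : l < n) (α : ℝ)
    (hD : (1:ℝ) - α ^ n ≠ 0) (i : ℕ) (hi : i + 1 ≤ n) :
    Afun n l α (i+1) = α * Afun n l α i + charSeq n l i := by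
  obtain ⟨m, rfl⟩ : ∃ m, n = m + 1 := ⟨n - 1, by omega⟩
  rw [Afun_F (m+1) l hn hl α (i+1) hi, Afun_F (m+1) l hn hl α i (by omega)]
  have key : (∑ j ∈ Finset.range (m+1),
        (charSeq (m+1) l (((i+1:ℕ):ℤ) - 1 - j) : ℝ) * α ^ j)
      = α * (∑ j ∈ Finset.range (m+1),
          (charSeq (m+1) l ((i:ℤ) - 1 - j) : ℝ) * α ^ j)
        + (charSeq (m+1) l i : ℝ) * (1 - α ^ (m+1)) := by
    rw [Finset.sum_range_succ'
      (fun j => (charSeq (m+1) l (((i+1:ℕ):ℤ) - 1 - (j:ℤ)) : ℝ) * α ^ j) m]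
    rw [Finset.mul_sum]
    rw [Finset.sum_range_succ
      (fun j => α * ((charSeq (m+1) l ((i:ℤ) - 1 - (j:ℤ)) : ℝ) * α ^ j)) m]
    have t1 : ∀ k ∈ Finset.range m,
        (charSeq (m+1) l (((i+1:ℕ):ℤ) - 1 - ((k+1:ℕ):ℤ)) : ℝ) * α ^ (k+1)
          = α * ((charSeq (m+1) l ((i:ℤ) - 1 - (k:ℤ)) : ℝ) * α ^ k) := by
      intro k _
      have e0 : ((i+1:ℕ):ℤ) - 1 - ((k+1:ℕ):ℤ) = (i:ℤ) - 1 - k := by push_cast; ring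
      rw [e0, pow_succ]
      ring
    rw [Finset.sum_congr rfl t1]
    have t2 : (charSeq (m+1) l ((i:ℤ) - 1 - (m:ℤ)) : ℝ) = charSeq (m+1) l i := by
      have e1 : (i:ℤ) - 1 - (m:ℤ) = (i:ℤ) - ((m+1:ℕ):ℤ) := by push_cast; ring
      rw [e1, charSeq_sub_n (m+1) l hn hl i]
    have t3 : (((i+1:ℕ):ℤ) - 1 - ((0:ℕ):ℤ)) = (i:ℤ) := by push_cast; ring
    rw [t3, t2]
    ring
  rw [key]
  field_simp

lemma charSeq_coefZ (n l : ℕ) (hn : 0 < n) (hl : l < n) (i : ℤ) (j : ℕ) :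
    (charSeq n l (i - 1 - j) : ℤ) = coefZ n l (i * l) j := by
  rw [charSeq_eq n l hn hl]
  unfold coefZ
  have : (i - 1 - j) * l = i * l - ((j:ℤ)+1)*l := by ring
  rw [this]

lemma Afun_G (n l : ℕ) (hn : 0 < n) (hl : l < n) (α : ℝ) (i : ℕ) (hi : i ≤ n) :
    Afun n l α i = (1 / (1 - α ^ n)) * Gfun n l α ((i:ℤ) * l) := by
  rw [Afun_F n l hn hl α i hi]
  congr 1
  unfold Gfun
  apply Finset.sum_congr rfl
  intro j _
  congr 1
  exact_mod_cast charSeq_coefZ n l hn hl i j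

lemma Gcongr (n l : ℕ) (α : ℝ) {r r' : ℤ} (h : r % n = r' % n) :
    Gfun n l α r = Gfun n l α r' := by
  unfold Gfun
  apply Finset.sum_congr rfl
  intro j _
  have h2 : (r - ((j:ℤ)+1)*l) % n = (r' - ((j:ℤ)+1)*l) % n := Int.ModEq.sub_right _ h
  unfold coefZ
  rw [h2]

lemma coef_step (n l : ℕ) (hn : 2 ≤ n) (hl0 : 0 < l) (hl : l < n) (r j : ℤ) :
    (coefZ n l r j : ℝ) - coefZ n l (r+1) j =
      (if ((j+1)*l - (r+1)) % n = 0 then (1:ℝ) else 0)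
      - (if ((j+1)*l - (r+1+l)) % n = 0 then (1:ℝ) else 0) := by
  have hn' : (2:ℤ) ≤ n := by exact_mod_cast hn
  have hl0' : (0:ℤ) < l := by exact_mod_cast hl0
  have hl' : (l:ℤ) < n := by exact_mod_cast hl
  obtain ⟨q, v, hxq, hv0, hv1⟩ :
      ∃ q v, r - (j+1)*(l:ℤ) = (n:ℤ)*q + v ∧ 0 ≤ v ∧ v < n :=
    ⟨(r - (j+1)*(l:ℤ))/n, (r - (j+1)*(l:ℤ)) % n, (Int.mul_ediv_add_emod _ _).symm,
      Int.emod_nonneg _ (by omega), Int.emod_lt_of_pos _ (by omega)⟩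
  have ev : (r - (j+1)*(l:ℤ)) % n = v := emod_val (q := q) (by linarith) hv0 hv1
  unfold coefZ
  rw [ev]
  by_cases hc1 : v = (n:ℤ) - 1
  · have e1 : (r + 1 - (j+1)*(l:ℤ)) % n = 0 :=
      emod_val (q := q + 1) (by linarith) le_rfl (by omega)
    have e2 : ((j+1)*(l:ℤ) - (r+1)) % n = 0 :=
      emod_val (q := -(q+1)) (by linarith) le_rfl (by omega)
    have e3 : ((j+1)*(l:ℤ) - (r+1+l)) % n = (n:ℤ) - l :=
      emod_val (q := -(q+2)) (by linarith) (by omega) (by omega)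
    rw [e1, e2, e3]
    split_ifs
    all_goals try (exfalso; clear hxq ev e1 e2 e3; omega)
    all_goals norm_num
  · by_cases hc2 : v = (n:ℤ) - 1 - l
    · have e1 : (r + 1 - (j+1)*(l:ℤ)) % n = (n:ℤ) - l :=
        emod_val (q := q) (by linarith) (by omega) (by omega)
      have e2 : ((j+1)*(l:ℤ) - (r+1)) % n = (l:ℤ) :=
        emod_val (q := -(q+1)) (by linarith) (by omega) (by omega)
      have e3 : ((j+1)*(l:ℤ) - (r+1+l)) % n = 0 :=
        emod_val (q := -(q+1)) (by linarith) le_rfl (by omega)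
      rw [e1, e2, e3]
      split_ifs
      all_goals try (exfalso; clear hxq ev e1 e2 e3; omega)
      all_goals norm_num
    · have e1 : (r + 1 - (j+1)*(l:ℤ)) % n = v + 1 :=
        emod_val (q := q) (by linarith) (by omega) (by omega)
      have e2 : ((j+1)*(l:ℤ) - (r+1)) % n = (n:ℤ) - 1 - v :=
        emod_val (q := -(q+1)) (by linarith) (by omega) (by omega)
      have e3 : ((j+1)*(l:ℤ) - (r+1+l)) % n ≠ 0 := by
        by_cases hc3 : v + 1 + l < n
        · rw [emod_val (q := -(q+1)) (by linarith) (by omega) (by omega :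
            (n:ℤ) - 1 - v - l < n)]
          omega
        · rw [emod_val (q := -(q+2)) (by linarith) (by omega) (by omega :
            2*(n:ℤ) - 1 - v - l < n)]
          omega
      rw [e1, e2]
      rw [if_neg e3]
      split_ifs
      all_goals try (exfalso; clear hxq ev e1 e3; omega)
      all_goals norm_num

lemma sum_delta (n l : ℕ) (hn : 2 ≤ n) (hgcd : Nat.gcd n l = 1) (α : ℝ)
    (s : ℤ) (j0 : ℕ) (hj0 : j0 < n) (hw : (((j0:ℤ)+1)*l - s) % n = 0) :
    ∑ j ∈ Finset.range n, (if (((j:ℤ)+1)*l - s) % n = 0 then (1:ℝ) else 0) * α^j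
      = α^j0 := by
  rw [Finset.sum_eq_single_of_mem j0 (Finset.mem_range.mpr hj0)]
  · rw [if_pos hw, one_mul]
  · intro j hj hne
    rw [Finset.mem_range] at hj
    rw [if_neg, zero_mul]
    intro hc
    have d1 : (n:ℤ) ∣ (((j:ℤ)+1)*l - s) := Int.dvd_of_emod_eq_zero hc
    have d2 : (n:ℤ) ∣ (((j0:ℤ)+1)*l - s) := Int.dvd_of_emod_eq_zero hw
    have d3 : (n:ℤ) ∣ ((j:ℤ) - j0) * l := by
      have : ((j:ℤ) - j0) * l = (((j:ℤ)+1)*l - s) - (((j0:ℤ)+1)*l - s) := by ring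
      rw [this]; exact dvd_sub d1 d2
    have hco : IsCoprime (n:ℤ) (l:ℤ) := Nat.isCoprime_iff_coprime.mpr hgcd
    have d4 : (n:ℤ) ∣ ((j:ℤ) - j0) := hco.dvd_of_dvd_mul_right d3
    have : ((j:ℤ) - j0) = 0 := Int.eq_zero_of_dvd_of_natAbs_lt_natAbs d4 (by
      simp only [Int.natAbs_natCast]; omega)
    omega

lemma Gstep_aux (n l : ℕ) (hn : 2 ≤ n) (hl0 : 0 < l) (hl : l < n)
    (hgcd : Nat.gcd n l = 1) (r : ℕ) (hr : r + 1 < n) :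
    ∃ j0 : ℕ, j0 + 1 < n ∧
      ((((j0:ℤ)+1)*l - ((r:ℤ)+1)) % n = 0) ∧
      ((((j0:ℤ)+1+1)*l - ((r:ℤ)+1+(l:ℤ))) % n = 0) := by
  haveI : NeZero n := ⟨by omega⟩
  have hco : Nat.Coprime l n := Nat.coprime_comm.mp hgcd
  have hlinv : (l : ZMod n) * (l : ZMod n)⁻¹ = 1 := ZMod.coe_mul_inv_eq_one l hco
  set u : ZMod n := ((r : ZMod n) + 1) * (l : ZMod n)⁻¹ - 1 with hu
  refine ⟨u.val, ?_, ?_, ?_⟩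
  · have h1 : u.val < n := ZMod.val_lt u
    rcases Nat.lt_or_ge (u.val + 1) n with h | h
    · exact h
    · exfalso
      have hv : u.val = n - 1 := by omega
      have h2 : ((u.val : ℕ) : ZMod n) = u := ZMod.natCast_rightInverse u
      have h3 : ((n - 1 : ℕ) : ZMod n) = -1 := by
        have : ((n - 1 : ℕ) : ZMod n) + 1 = ((n : ℕ) : ZMod n) := by
          rw [← Nat.cast_add_one]; congr 1; omega
        rw [ZMod.natCast_self] at this
        linear_combination this
      rw [hv, h3] at h2
      have h4 : ((r : ZMod n) + 1) * (l : ZMod n)⁻¹ = 0 := by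
        rw [hu] at h2; linear_combination -h2
      have h5 : (r : ZMod n) + 1 = 0 := by
        have := congrArg (· * (l : ZMod n)) h4
        simp only [zero_mul] at this
        linear_combination this - ((r : ZMod n) + 1) * hlinv
      have h6 : ((r + 1 : ℕ) : ZMod n) = 0 := by push_cast; exact h5
      have h7 : n ∣ r + 1 := (ZMod.natCast_eq_zero_iff _ _).mp h6
      have := Nat.le_of_dvd (by omega) h7
      omega
  · have h2 : ((u.val : ℕ) : ZMod n) = u := ZMod.natCast_rightInverse u
    apply Int.emod_eq_zero_of_dvd
    have hz : (((((u.val):ℤ)+1)*l - ((r:ℤ)+1) : ℤ) : ZMod n) = 0 := by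
      push_cast
      rw [h2, hu]
      linear_combination ((r : ZMod n)+1) * hlinv
    exact (ZMod.intCast_zmod_eq_zero_iff_dvd _ n).mp hz
  · have h2 : ((u.val : ℕ) : ZMod n) = u := ZMod.natCast_rightInverse u
    apply Int.emod_eq_zero_of_dvd
    have hz : (((((u.val):ℤ)+1+1)*l - ((r:ℤ)+1+(l:ℤ)) : ℤ) : ZMod n) = 0 := by
      push_cast
      rw [h2, hu]
      linear_combination ((r : ZMod n)+1) * hlinv
    exact (ZMod.intCast_zmod_eq_zero_iff_dvd _ n).mp hz

lemma Gstep (n l : ℕ) (hn : 2 ≤ n) (hl0 : 0 < l) (hl : l < n)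
    (hgcd : Nat.gcd n l = 1) (α : ℝ) (hα : 0 < α) (hα1 : α < 1)
    (r : ℕ) (hr : r + 1 < n) : Gfun n l α ((r:ℤ)+1) < Gfun n l α r := by
  obtain ⟨j0, hj1, hw1, hw2⟩ := Gstep_aux n l hn hl0 hl hgcd r hr
  have hw2' : ((((j0+1:ℕ):ℤ)+1)*l - ((r:ℤ)+1+(l:ℤ))) % n = 0 := by
    push_cast
    push_cast at hw2
    convert hw2 using 3 <;> ring
  have key : Gfun n l α r - Gfun n l α ((r:ℤ)+1) = α^j0 - α^(j0+1) := by
    unfold Gfun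
    rw [← Finset.sum_sub_distrib]
    rw [Finset.sum_congr rfl (fun j _ => by
      rw [← sub_mul, coef_step n l hn hl0 hl (r:ℤ) (j:ℤ), sub_mul])]
    rw [Finset.sum_sub_distrib,
      sum_delta n l hn hgcd α ((r:ℤ)+1) j0 (by omega) hw1,
      sum_delta n l hn hgcd α ((r:ℤ)+1+(l:ℤ)) (j0+1) hj1 hw2']
  have hpow : α^(j0+1) < α^j0 :=
    pow_lt_pow_right_of_lt_one₀ hα hα1 (Nat.lt_succ_self j0)
  linarith

lemma Ganti (n l : ℕ) (hn : 2 ≤ n) (hl0 : 0 < l) (hl : l < n)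
    (hgcd : Nat.gcd n l = 1) (α : ℝ) (hα : 0 < α) (hα1 : α < 1) :
    ∀ s : ℕ, s < n → ∀ r : ℕ, r < s → Gfun n l α (s:ℤ) < Gfun n l α (r:ℤ) := by
  intro s
  induction s with
  | zero => intro _ r hr; omega
  | succ m ih =>
    intro hs r hr
    have hstep : Gfun n l α ((m:ℤ)+1) < Gfun n l α (m:ℤ) :=
      Gstep n l hn hl0 hl hgcd α hα hα1 m hs
    have e : ((m+1:ℕ):ℤ) = (m:ℤ)+1 := by push_cast; ring
    rw [e]
    rcases Nat.lt_or_ge r m with h | h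
    · exact lt_trans hstep (ih (by omega) r h)
    · have : r = m := by omega
      rw [this]; exact hstep

lemma coefZ_top (n l : ℕ) (hn : 2 ≤ n) (hl0 : 0 < l) (hl : l < n) (j : ℕ) :
    coefZ n l ((n:ℤ)-1) j = charSeq n l j := by
  have hn' : (2:ℤ) ≤ n := by exact_mod_cast hn
  have hl0' : (0:ℤ) < l := by exact_mod_cast hl0
  have hl' : (l:ℤ) < n := by exact_mod_cast hl
  rw [charSeq_eq n l (by omega) hl]
  unfold coefZ
  obtain ⟨q, s, hqs, hs0, hs1⟩ :
      ∃ q s, (j:ℤ) * l = (n:ℤ)*q + s ∧ 0 ≤ s ∧ s < n :=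
    ⟨((j:ℤ)*l)/n, ((j:ℤ)*l) % n, (Int.mul_ediv_add_emod _ _).symm,
      Int.emod_nonneg _ (by omega), Int.emod_lt_of_pos _ (by omega)⟩
  have es : ((j:ℤ)*l) % n = s := emod_val (q := q) (by linarith) hs0 hs1
  rw [es]
  by_cases hc : (n:ℤ) ≤ s + l
  · have e1 : ((n:ℤ)-1 - ((j:ℤ)+1)*l) % n = 2*n - 1 - l - s :=
      emod_val (q := -q-1) (by linarith) (by omega) (by omega)
    rw [e1, if_pos (by omega), if_pos hc]
  · have e1 : ((n:ℤ)-1 - ((j:ℤ)+1)*l) % n = n - 1 - l - s :=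
      emod_val (q := -q) (by linarith) (by omega) (by omega)
    rw [e1, if_neg (by omega), if_neg hc]

lemma coefZ_zero (n l : ℕ) (hn : 2 ≤ n) (hl0 : 0 < l) (hl : l < n)
    (hgcd : Nat.gcd n l = 1) (j : ℕ) (hj : j < n) :
    coefZ n l 0 j = charSeq n l j
      + (if j = 0 then 1 else 0) - (if j = n-1 then 1 else 0) := by
  have hn' : (2:ℤ) ≤ n := by exact_mod_cast hn
  have hl0' : (0:ℤ) < l := by exact_mod_cast hl0
  have hl' : (l:ℤ) < n := by exact_mod_cast hl
  have hco : IsCoprime (n:ℤ) (l:ℤ) := Nat.isCoprime_iff_coprime.mpr hgcd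
  rw [charSeq_eq n l (by omega) hl]
  unfold coefZ
  obtain ⟨q, s, hqs, hs0, hs1⟩ :
      ∃ q s, (j:ℤ) * l = (n:ℤ)*q + s ∧ 0 ≤ s ∧ s < n :=
    ⟨((j:ℤ)*l)/n, ((j:ℤ)*l) % n, (Int.mul_ediv_add_emod _ _).symm,
      Int.emod_nonneg _ (by omega), Int.emod_lt_of_pos _ (by omega)⟩
  have es : ((j:ℤ)*l) % n = s := emod_val (q := q) (by linarith) hs0 hs1
  rw [es]
  by_cases hj0 : j = 0
  · subst hj0
    have hs : s = 0 := by simpa using es.symm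
    have e1 : ((0:ℤ) - (((0:ℕ):ℤ)+1)*l) % n = n - l :=
      emod_val (q := -1) (by push_cast; ring) (by omega) (by omega)
    rw [e1]
    rw [if_pos (by omega), if_neg (by omega : ¬ (n:ℤ) ≤ s + l),
      if_pos rfl, if_neg (by omega : ¬ (0:ℕ) = n-1)]
    norm_num
  · by_cases hj1 : j = n - 1
    · subst hj1
      have hsv : s = (n:ℤ) - l := by
        have h2 : (((n-1 : ℕ):ℤ) * l) % n = (n:ℤ) - l :=
          emod_val (q := l-1) (by
            push_cast [Nat.cast_sub (by omega : 1 ≤ n)]; ring) (by omega) (by omega)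
        rw [h2] at es
        omega
      have e1 : ((0:ℤ) - (((n-1:ℕ):ℤ)+1)*l) % n = 0 :=
        emod_val (q := -l) (by
          push_cast [Nat.cast_sub (by omega : 1 ≤ n)]; ring) le_rfl (by omega)
      rw [e1, hsv]
      rw [if_neg (by omega), if_pos (by omega), if_neg (by omega : ¬ n-1 = 0),
        if_pos rfl]
      norm_num
    · have hjn : 1 ≤ j ∧ j ≤ n - 2 := by omega
      have hf1 : ¬ (n:ℤ) ∣ (j:ℤ)*l := by
        intro hdvd
        have : (n:ℤ) ∣ (j:ℤ) := hco.dvd_of_dvd_mul_right hdvd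
        have := Int.le_of_dvd (by exact_mod_cast (by omega : (0:ℤ) < j)) this
        omega
      have hf2 : ¬ (n:ℤ) ∣ ((j:ℤ)+1)*l := by
        intro hdvd
        have : (n:ℤ) ∣ ((j:ℤ)+1) := hco.dvd_of_dvd_mul_right hdvd
        have := Int.le_of_dvd (by omega) this
        omega
      have hs0' : 1 ≤ s := by
        by_contra h2
        have h : s = 0 := by omega
        exact hf1 ⟨q, by linear_combination hqs + h⟩
      have hsnl : s ≠ (n:ℤ) - l := by
        intro h
        exact hf2 ⟨q+1, by linear_combination hqs + h⟩
      rw [if_neg hj0, if_neg hj1]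
      by_cases hc : (n:ℤ) ≤ s + l
      · have e1 : ((0:ℤ) - ((j:ℤ)+1)*l) % n = 2*n - s - l :=
          emod_val (q := -q-2) (by linarith) (by omega) (by omega)
        rw [e1, if_pos (by omega), if_pos hc]
        norm_num
      · have e1 : ((0:ℤ) - ((j:ℤ)+1)*l) % n = n - s - l :=
          emod_val (q := -q-1) (by linarith) (by omega) (by omega)
        rw [e1, if_neg (by omega), if_neg hc]
        norm_num

lemma delta_pow (n c : ℕ) (hc : c < n) (α : ℝ) :
    ∑ j ∈ Finset.range n, (if j = c then (1:ℝ) else 0) * α^j = α^c := by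
  rw [Finset.sum_eq_single_of_mem c (Finset.mem_range.mpr hc)]
  · simp
  · intro j _ hne
    simp [hne]

lemma exists_istar (n l : ℕ) (hn : 2 ≤ n) (hgcd : Nat.gcd n l = 1) :
    ∃ i, i < n ∧ (i * l) % n = n - 1 := by
  haveI : NeZero n := ⟨by omega⟩
  have hco : Nat.Coprime l n := Nat.coprime_comm.mp hgcd
  have hlinv : (l : ZMod n) * (l : ZMod n)⁻¹ = 1 := ZMod.coe_mul_inv_eq_one l hco
  set u : ZMod n := (-1) * (l : ZMod n)⁻¹ with hu
  refine ⟨u.val, ZMod.val_lt u, ?_⟩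
  have h2 : ((u.val : ℕ) : ZMod n) = u := ZMod.natCast_rightInverse u
  have h4 : ((n-1:ℕ) : ZMod n) = -1 := by
    have : ((n - 1 : ℕ) : ZMod n) + 1 = ((n : ℕ) : ZMod n) := by
      rw [← Nat.cast_add_one]; congr 1; omega
    rw [ZMod.natCast_self] at this
    linear_combination this
  have h3 : ((u.val * l : ℕ) : ZMod n) = ((n - 1 : ℕ) : ZMod n) := by
    push_cast
    rw [h2, hu, h4]
    linear_combination (-1 : ZMod n) * hlinv
  have h5 := congrArg ZMod.val h3
  rw [ZMod.val_natCast, ZMod.val_natCast] at h5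
  rw [Nat.mod_eq_of_lt (by omega : n - 1 < n)] at h5
  exact h5

lemma rmap_inj (n l : ℕ) (hgcd : Nat.gcd n l = 1) {i i' : ℕ}
    (hi : i < n) (hi' : i' < n) (h : (i*l) % n = (i'*l) % n) : i = i' := by
  have h2 : i ≡ i' [MOD n] := Nat.ModEq.cancel_right_of_coprime hgcd h
  unfold Nat.ModEq at h2
  rw [Nat.mod_eq_of_lt hi, Nat.mod_eq_of_lt hi'] at h2
  exact h2

/-- reduction of `Gfun` at `i*l` to the residue. -/
lemma Gfun_res (n l : ℕ) (hn : 0 < n) (α : ℝ) (i : ℕ) :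
    Gfun n l α ((i:ℤ) * l) = Gfun n l α (((i*l) % n : ℕ) : ℤ) := by
  apply Gcongr
  have e1 : (((i*l) % n : ℕ) : ℤ) = ((i:ℤ)*l) % n := by
    push_cast
    ring_nf
  rw [e1, Int.emod_emod_of_dvd _ dvd_rfl]

end Aux

/-- For `(α,β) ∈ D_{n,l}`, the points `p_i = β/(1-α) - A_i(α)`, `i = 0,…,n-1`,
form a period-`n` orbit of `S_{α,β}`: `S_{α,β}(p_i) = p_{(i+1) mod n}`, and the `p_i`
are pairwise distinct points of `[0,1)`. -/
theorem periodic_orbit_formula (n l : ℕ) (hn : 2 ≤ n) (hl : l < n)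
    (hgcd : Nat.gcd n l = 1) (α β : ℝ) (hD : (α, β) ∈ Dset n l) :
    (∀ i < n, β / (1 - α) - Afun n l α i ∈ Set.Ico (0 : ℝ) 1) ∧
    (∀ i < n, Smap α β (β / (1 - α) - Afun n l α i) =
      β / (1 - α) - Afun n l α ((i + 1) % n)) ∧
    (∀ i < n, ∀ j < n, i ≠ j →
      β / (1 - α) - Afun n l α i ≠ β / (1 - α) - Afun n l α j) := by
  obtain ⟨hαIoo, hβIoo, hBLb, hBUb⟩ := hD
  obtain ⟨hα0, hα1⟩ := hαIoo
  have hn0 : 0 < n := by omega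
  have hl0 : 0 < l := by
    rcases Nat.eq_zero_or_pos l with h | h
    · exfalso; rw [h, Nat.gcd_zero_right] at hgcd; omega
    · exact h
  have hDpos : (0:ℝ) < 1 - α^n := by
    have := pow_lt_one₀ (le_of_lt hα0) hα1 (by omega : n ≠ 0)
    linarith
  have hDne : (1:ℝ) - α^n ≠ 0 := ne_of_gt hDpos
  have h1α : (0:ℝ) < 1 - α := by linarith
  have hAG : ∀ i ≤ n, Afun n l α i
      = (1/(1-α^n)) * Gfun n l α (((i*l) % n : ℕ) : ℤ) := by
    intro i hi
    rw [Afun_G n l hn0 hl α i hi, Gfun_res n l hn0 α i]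
  have hcomp : ∀ i ≤ n, ∀ i' ≤ n, (i*l) % n < (i'*l) % n →
      Afun n l α i' < Afun n l α i := by
    intro i hi i' hi' hlt
    rw [hAG i hi, hAG i' hi']
    have hG := Ganti n l hn hl0 hl hgcd α hα0 hα1 ((i'*l)%n)
      (Nat.mod_lt _ hn0) ((i*l)%n) hlt
    have hD2 : (0:ℝ) < 1/(1-α^n) := by positivity
    exact mul_lt_mul_of_pos_left hG hD2
  obtain ⟨istar, histar, hristar⟩ := exists_istar n l hn hgcd
  have hr0 : (0 * l) % n = 0 := by simp
  have hmax : ∀ i ≤ n, Afun n l α i ≤ Afun n l α 0 := by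
    intro i hi
    rcases Nat.eq_zero_or_pos ((i*l) % n) with h | h
    · rw [hAG i hi, hAG 0 (by omega), hr0, h]
    · have := hcomp 0 (by omega) i hi (by rw [hr0]; exact h)
      linarith
  have hmin : ∀ i ≤ n, Afun n l α istar ≤ Afun n l α i := by
    intro i hi
    rcases Nat.lt_or_ge ((i*l)%n) (n-1) with h | h
    · have := hcomp i hi istar (le_of_lt histar) (by rw [hristar]; exact h)
      linarith
    · have h2 : (i*l) % n = n - 1 := by
        have := Nat.mod_lt (i*l) hn0; omega
      rw [hAG i hi, hAG istar (by omega), hristar, h2]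
  have hG_top : Gfun n l α ((n:ℤ)-1)
      = ∑ m ∈ Finset.Ico 1 n, (charSeq n l m : ℝ) * α^m := by
    unfold Gfun
    have hterm : ∀ j ∈ Finset.range n,
        ((coefZ n l ((n:ℤ)-1) j : ℤ):ℝ) * α^j = (charSeq n l j : ℝ) * α^j := by
      intro j _
      rw [coefZ_top n l hn hl0 hl j]
    rw [Finset.sum_congr rfl hterm, Finset.range_eq_Ico,
      Finset.sum_eq_sum_Ico_succ_bot hn0]
    have hk0 : (charSeq n l ((0:ℕ):ℤ) : ℝ) = 0 := by
      have e : (((0:ℕ):ℤ) * l) % n = 0 := by simp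
      have hln : (l:ℤ) < n := by exact_mod_cast hl
      rw [charSeq_eq n l hn0 hl, e, if_neg (by omega)]
      norm_num
    rw [hk0]
    norm_num
  have hG_zero : Gfun n l α 0 = Gfun n l α ((n:ℤ)-1) + 1 - α^(n-1) := by
    unfold Gfun
    have hterm : ∀ j ∈ Finset.range n, ((coefZ n l 0 j : ℤ):ℝ) * α^j
        = ((coefZ n l ((n:ℤ)-1) j : ℤ):ℝ)*α^j + (if j = 0 then (1:ℝ) else 0)*α^j
          - (if j = n-1 then (1:ℝ) else 0)*α^j := by
      intro j hj
      rw [Finset.mem_range] at hj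
      have h := coefZ_zero n l hn hl0 hl hgcd j hj
      rw [← coefZ_top n l hn hl0 hl j] at h
      have hcast : ((coefZ n l 0 j : ℤ):ℝ) = ((coefZ n l ((n:ℤ)-1) j : ℤ):ℝ)
          + (if j = 0 then (1:ℝ) else 0) - (if j = n-1 then (1:ℝ) else 0) := by
        split_ifs at h ⊢ <;> exact_mod_cast h
      rw [hcast]; ring
    rw [Finset.sum_congr rfl hterm]
    rw [Finset.sum_sub_distrib, Finset.sum_add_distrib,
      delta_pow n 0 hn0 α, delta_pow n (n-1) (by omega) α, pow_zero]
  have hcast_n1 : (((n-1:ℕ)):ℤ) = (n:ℤ)-1 := by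
    push_cast [Nat.cast_sub (by omega : 1 ≤ n)]; ring
  have hAstar : Afun n l α istar = (1/(1-α^n)) * Gfun n l α ((n:ℤ)-1) := by
    rw [hAG istar (le_of_lt histar), hristar, hcast_n1]
  have hA0 : Afun n l α 0 = (1/(1-α^n)) * Gfun n l α 0 := by
    rw [hAG 0 (by omega), hr0, Nat.cast_zero]
  have hBUeq : BU n l α = (1-α) * (Afun n l α istar + 1) := by
    unfold BU
    rw [← hG_top, hAstar]
  have hBLeq : BL n l α = (1-α) * Afun n l α 0 := by
    unfold BL
    rw [hBUeq, hA0, hG_zero, hAstar]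
    field_simp
    ring
  have hmem : ∀ i ≤ n, β / (1-α) - Afun n l α i ∈ Set.Ico (0:ℝ) 1 := by
    intro i hi
    rw [Set.mem_Ico]
    constructor
    · have h1 : (1-α) * Afun n l α i ≤ (1-α) * Afun n l α 0 :=
        mul_le_mul_of_nonneg_left (hmax i hi) (le_of_lt h1α)
      have h2 : Afun n l α i * (1-α) ≤ β := by
        rw [hBLeq] at hBLb; nlinarith
      have h3 : Afun n l α i ≤ β / (1-α) := (le_div_iff₀ h1α).mpr h2
      linarith
    · have h1 : β < (1-α) * (Afun n l α i + 1) := by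
        have h2 : (1-α) * (Afun n l α istar + 1) ≤ (1-α) * (Afun n l α i + 1) :=
          mul_le_mul_of_nonneg_left (by linarith [hmin i hi]) (le_of_lt h1α)
        rw [hBUeq] at hBUb
        linarith
      have h2 : β/(1-α) < Afun n l α i + 1 := (div_lt_iff₀ h1α).mpr (by nlinarith)
      linarith
  refine ⟨fun i hi => hmem i (le_of_lt hi), ?_, ?_⟩
  · intro i hi
    have hrec := Afun_rec n l hn0 hl α hDne i hi
    have harg : α * (β/(1-α) - Afun n l α i) + β
        = (β/(1-α) - Afun n l α ((i+1) % n)) + ((charSeq n l i : ℤ) : ℝ) := by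
      rcases Nat.lt_or_ge (i+1) n with h | h
      · rw [Nat.mod_eq_of_lt h, hrec]
        field_simp
        ring
      · have he : i + 1 = n := by omega
        rw [he, Nat.mod_self]
        rw [he, Afun_n_eq_zero n l hn0 hl α] at hrec
        rw [hrec]
        field_simp
        ring
    unfold Smap
    rw [harg, Int.fract_add_intCast, Int.fract_eq_self.mpr]
    have hm := hmem ((i+1)%n) (le_of_lt (Nat.mod_lt _ hn0))
    rw [Set.mem_Ico] at hm
    exact hm
  · intro i hi j hj hne
    have hAne : Afun n l α i ≠ Afun n l α j := by
      have hrne : (i*l)%n ≠ (j*l)%n := fun h => hne (rmap_inj n l hgcd hi hj h)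
      rcases Nat.lt_or_ge ((i*l)%n) ((j*l)%n) with h | h
      · have := hcomp i (le_of_lt hi) j (le_of_lt hj) h
        exact ne_of_gt this
      · have h' : (j*l)%n < (i*l)%n := by omega
        have := hcomp j (le_of_lt hj) i (le_of_lt hi) h'
        exact (ne_of_gt this).symm
    intro heq
    apply hAne
    linarith [heq]
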